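/- arXiv:1004.0487 — 2 statements merged into one kernel-verified Lean document; each statement's English description precedes it below -/
import Mathlib

section
/- Let $\beta_{\min} \leq \beta \leq \beta_{\max}$ and $V_w > 0$ be fixed. Let $C_p : (0,\infty) \times [\beta_{\min}, \beta_{\max}] \to \mathbb{R}$ be continuous in $\lambda$, and suppose: (A2) there exists $c > 0$ with $C_p(\lambda, \beta) \leq c\lambda$ for all $\lambda > 0$; (A3) there exists $\lambda_1 > 0$ with $C_p(\lambda, \beta) > 0$ for all $\lambda \in (0, \lambda_1)$. Define $T_m(\omega_r) = \frac{\tfrac{1}{2}\rho A\, C_p(\omega_r R / V_w, \beta) V_w^3}{\omega_r}$ with $\rho, A, R > 0$, let $C_f > 0$, $a' < 0$, and $g(\omega_r) = T_m(\omega_r) - a' - C_f \omega_r$. Then there exists $\omega_r^{(1)} \in (0, \infty)$ such that $g(\omega_r^{(1)}) = 0$ and $g(\omega_r) > 0$ for all $\omega_r \in (0, \omega_r^{(1)})$. -/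
theorem stmt_6 (βmin βmax β Vw ρ A R Cf a' : ℝ)
    (hβ : βmin ≤ β ∧ β ≤ βmax) (hVw : Vw > 0)
    (Cp : ℝ → ℝ → ℝ)
    (hcont : ContinuousOn (fun l => Cp l β) (Set.Ioi 0))
    (hA2 : ∃ c > (0 : ℝ), ∀ l > (0 : ℝ), Cp l β ≤ c * l)
    (hA3 : ∃ l1 > (0 : ℝ), ∀ l ∈ Set.Ioo (0 : ℝ) l1, Cp l β > 0)
    (hρ : ρ > 0) (hAr : A > 0) (hR : R > 0) (hCf : Cf > 0) (ha' : a' < 0) :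
    let Tm : ℝ → ℝ := fun ωr => (1 / 2 * ρ * A * Cp (ωr * R / Vw) β * Vw ^ 3) / ωr
    let g : ℝ → ℝ := fun ωr => Tm ωr - a' - Cf * ωr
    ∃ ωr1 > (0 : ℝ), g ωr1 = 0 ∧ ∀ ωr ∈ Set.Ioo (0 : ℝ) ωr1, g ωr > 0 := by
  intro Tm g
  obtain ⟨c, hc, hA2⟩ := hA2
  obtain ⟨l1, hl1, hA3⟩ := hA3
  -- continuity of g on Ioi 0
  have hgc : ContinuousOn g (Set.Ioi 0) := by
    have h1 : ContinuousOn (fun ω : ℝ => Cp (ω * R / Vw) β) (Set.Ioi 0) := by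
      apply hcont.comp (by fun_prop)
      intro x hx
      exact Set.mem_Ioi.2 (div_pos (mul_pos (Set.mem_Ioi.1 hx) hR) hVw)
    have hnum : ContinuousOn (fun ω : ℝ => 1 / 2 * ρ * A * Cp (ω * R / Vw) β * Vw ^ 3) (Set.Ioi 0) :=
      (continuousOn_const.mul h1).mul continuousOn_const
    have h2 : ContinuousOn Tm (Set.Ioi 0) := by
      apply ContinuousOn.div hnum continuousOn_id
      intro x hx; exact ne_of_gt (Set.mem_Ioi.1 hx)
    fun_prop
  -- small positive region
  set ε : ℝ := min (l1 * Vw / (2 * R)) (-a' / (2 * Cf)) with hεdef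
  have hε : 0 < ε := by
    apply lt_min
    · positivity
    · have : 0 < -a' := by linarith
      positivity
  have hsmall : ∀ ω : ℝ, 0 < ω → ω ≤ ε → 0 < g ω := by
    intro ω hω hωε
    have hl : ω * R / Vw ∈ Set.Ioo (0 : ℝ) l1 := by
      constructor
      · positivity
      · have h1 : ω ≤ l1 * Vw / (2 * R) := le_trans hωε (min_le_left _ _)
        have h1' : ω * (2 * R) ≤ l1 * Vw := (le_div_iff₀ (by positivity)).1 h1
        rw [div_lt_iff₀ hVw]
        nlinarith [mul_pos hl1 hVw]
    have hCp := hA3 _ hl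
    have hTm : 0 < Tm ω := by
      apply div_pos _ hω
      positivity
    have h2 : ω ≤ -a' / (2 * Cf) := le_trans hωε (min_le_right _ _)
    have h3 : Cf * ω ≤ -a' / 2 := by
      have h2' : ω * (2 * Cf) ≤ -a' := (le_div_iff₀ (by positivity)).1 h2
      linarith
    have : g ω = Tm ω - a' - Cf * ω := rfl
    rw [this]
    linarith
  -- big point where g is negative
  set K : ℝ := 1 / 2 * ρ * A * c * R * Vw ^ 2 with hK
  set ωb : ℝ := max (ε + 1) ((K - a' + 1) / Cf) with hωb
  have hωbε : ε < ωb := lt_of_lt_of_le (by linarith) (le_max_left _ _)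
  have hωbpos : 0 < ωb := lt_trans hε hωbε
  have hgb : g ωb < 0 := by
    have hl : 0 < ωb * R / Vw := by positivity
    have hCp := hA2 _ hl
    have hTm : Tm ωb ≤ K := by
      have : Tm ωb = (1 / 2 * ρ * A * Cp (ωb * R / Vw) β * Vw ^ 3) / ωb := rfl
      rw [this, div_le_iff₀ hωbpos, hK]
      have h4 : 1 / 2 * ρ * A * Vw ^ 3 * Cp (ωb * R / Vw) β ≤
          1 / 2 * ρ * A * Vw ^ 3 * (c * (ωb * R / Vw)) := by
        apply mul_le_mul_of_nonneg_left hCp (by positivity)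
      have h5 : 1 / 2 * ρ * A * Vw ^ 3 * (c * (ωb * R / Vw)) =
          1 / 2 * ρ * A * c * R * Vw ^ 2 * ωb := by
        field_simp
      nlinarith [h4, h5]
    have h6 : (K - a' + 1) / Cf ≤ ωb := le_max_right _ _
    have h7 : K - a' + 1 ≤ Cf * ωb := by
      rw [div_le_iff₀ hCf] at h6; linarith
    have : g ωb = Tm ωb - a' - Cf * ωb := rfl
    rw [this]; linarith
  -- zero set
  have hgcIcc : ∀ x y : ℝ, 0 < x → ContinuousOn g (Set.Icc x y) := by
    intro x y hx
    exact hgc.mono (fun z hz => lt_of_lt_of_le hx hz.1)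
  set S : Set ℝ := Set.Icc ε ωb ∩ g ⁻¹' {0} with hS
  have hSclosed : IsClosed S :=
    (hgcIcc ε ωb hε).preimage_isClosed_of_isClosed isClosed_Icc isClosed_singleton
  have hScomp : IsCompact S :=
    isCompact_Icc.of_isClosed_subset hSclosed Set.inter_subset_left
  have hgε : 0 < g ε := hsmall ε hε le_rfl
  have hSne : S.Nonempty := by
    have := intermediate_value_Icc' (le_of_lt hωbε) (hgcIcc ε ωb hε)
    have h0 : (0:ℝ) ∈ Set.Icc (g ωb) (g ε) := ⟨le_of_lt hgb, le_of_lt hgε⟩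
    obtain ⟨z, hz, hz0⟩ := this h0
    exact ⟨z, hz, hz0⟩
  obtain ⟨ωr1, hωr1S, hleast⟩ := hScomp.exists_isLeast hSne
  obtain ⟨⟨hωr1l, hωr1r⟩, hωr1g⟩ := hωr1S
  have hωr1g : g ωr1 = 0 := hωr1g
  have hωr1pos : 0 < ωr1 := lt_of_lt_of_le hε hωr1l
  refine ⟨ωr1, hωr1pos, hωr1g, ?_⟩
  intro ω hω
  obtain ⟨hω0, hωlt⟩ := hω
  by_cases hcase : ω ≤ ε
  · exact hsmall ω hω0 hcase
  · push_neg at hcase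
    by_contra hneg
    push_neg at hneg
    have := intermediate_value_Icc' (le_of_lt hcase) (hgcIcc ε ω hε)
    have h0 : (0:ℝ) ∈ Set.Icc (g ω) (g ε) := ⟨hneg, le_of_lt hgε⟩
    obtain ⟨z, hz, hz0⟩ := this h0
    have hzS : z ∈ S := ⟨⟨hz.1, le_trans hz.2 (le_of_lt (lt_of_lt_of_le hωlt hωr1r))⟩, hz0⟩
    have := hleast hzS
    have := hz.2
    linarith
end

section
/- Let $J, \alpha > 0$, let $g : (0,\infty) \to \mathbb{R}$ be continuous, and suppose there exists $\omega_r^{(1)} > 0$ such that $g(\omega_r) > 0$ for all $\omega_r \in (0, \omega_r^{(1)})$. Fix $\omega_{rd}$ with $0 < \omega_{rd} < \omega_r^{(1)}$. Then $\omega_r = \omega_{rd}$ is the unique equilibrium point in $(0,\infty)$ of the differential equation $J \dot{\omega}_r = \min\{\alpha(\omega_{rd} - \omega_r),\, g(\omega_r)\}$, i.e., the right-hand side vanishes at $\omega_r = \omega_{rd}$ and is nonzero at every other $\omega_r \in (0, \infty)$. -/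
theorem stmt_8 (J α : ℝ) (hJ : J > 0) (hα : α > 0) (g : ℝ → ℝ)
    (hcont : ContinuousOn g (Set.Ioi 0)) (ωr1 : ℝ) (hωr1 : ωr1 > 0)
    (hgpos : ∀ ω ∈ Set.Ioo (0 : ℝ) ωr1, g ω > 0)
    (ωrd : ℝ) (h1 : 0 < ωrd) (h2 : ωrd < ωr1) :
    min (α * (ωrd - ωrd)) (g ωrd) = 0 ∧
    ∀ ω > (0 : ℝ), ω ≠ ωrd → min (α * (ωrd - ω)) (g ω) ≠ 0 := by
  constructor
  · have : g ωrd > 0 := hgpos ωrd ⟨h1, h2⟩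
    simp [min_eq_left, this.le]
  · intro ω hω hne hmin
    have ha : α * (ωrd - ω) ≥ 0 := by
      by_contra h
      push_neg at h
      have := min_le_left (α * (ωrd - ω)) (g ω)
      linarith [hmin ▸ this]
    have hωle : ω ≤ ωrd := by nlinarith
    have hg : g ω > 0 := hgpos ω ⟨hω, lt_of_le_of_lt hωle h2⟩
    have : min (α * (ωrd - ω)) (g ω) = α * (ωrd - ω) ∨
           min (α * (ωrd - ω)) (g ω) = g ω := min_choice _ _
    rcases this with h | h
    · have : α * (ωrd - ω) = 0 := h ▸ hmin
      have : ωrd - ω = 0 := by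
        rcases mul_eq_zero.mp this with h' | h'
        · exact absurd h' (ne_of_gt hα)
        · exact h'
      exact hne (by linarith)
    · exact absurd (h ▸ hmin) (ne_of_gt hg)
end
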